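/- There is no n ∈ ℕ with h_n > 0, h_{n+1} > 0, and h_{n+2} > 0. -/

import Mathlib

def t (n : ℕ) : ℤ := (-1) ^ ((Nat.digits 2 n).sum)

def h : ℕ → ℤ
  | 0 => 0
  | 1 => 1
  | (n + 2) => t (n + 2) * h (n + 1) + h n

lemma t_pm (n : ℕ) : t n = 1 ∨ t n = -1 := by
  unfold t
  rcases Nat.even_or_odd ((Nat.digits 2 n).sum) with he | ho
  · exact Or.inl (he.neg_one_pow)
  · exact Or.inr (ho.neg_one_pow)

lemma t_sq (n : ℕ) : t n * t n = 1 := by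
  rcases t_pm n with h | h <;> rw [h] <;> norm_num

lemma t_two_mul (n : ℕ) : t (2 * n) = t n := by
  rcases Nat.eq_zero_or_pos n with rfl | hn
  · norm_num
  · unfold t
    rw [Nat.digits_def' (by norm_num : 1 < 2) (by omega : 0 < 2 * n)]
    simp [Nat.mul_div_cancel_left, Nat.mul_mod_right]

lemma t_odd (n : ℕ) : t (2 * n + 1) = - t n := by
  unfold t
  rw [Nat.digits_def' (by norm_num : 1 < 2) (by omega : 0 < 2 * n + 1)]
  have h1 : (2 * n + 1) % 2 = 1 := by omega
  have h2 : (2 * n + 1) / 2 = n := by omega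
  rw [h1, h2]
  simp [pow_add, pow_succ, mul_comm]

lemma t_ne (n : ℕ) : t n ≠ - t n := by
  rcases t_pm n with h | h <;> rw [h] <;> norm_num

lemma no_three (n : ℕ) : ¬ (t n = t (n + 1) ∧ t (n + 1) = t (n + 2)) := by
  rintro ⟨h1, h2⟩
  rcases Nat.even_or_odd n with ⟨k, hk⟩ | ⟨k, hk⟩
  · subst hk
    rw [show k + k = 2 * k by ring, t_two_mul, show 2 * k + 1 = 2 * k + 1 from rfl, t_odd] at h1
    exact t_ne k h1
  · subst hk
    rw [show 2 * k + 1 + 1 = 2 * (k + 1) by ring, t_two_mul,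
        show 2 * k + 1 + 2 = 2 * (k + 1) + 1 by ring, t_odd] at h2
    exact t_ne (k + 1) h2

/-- B: odd-indexed values in terms of even ones -/
lemma hB (n : ℕ) : h (2 * (n + 1) + 1) = - t (n + 1) * h (2 * n) := by
  have e1 : 2 * (n + 1) + 1 = (2 * n + 1) + 2 := by ring
  have e2 : 2 * (n + 1) = 2 * n + 2 := by ring
  rw [e1, h]
  rw [show 2 * n + 1 + 2 = 2 * (n + 1) + 1 by ring, t_odd]
  rw [show 2 * n + 1 + 1 = 2 * (n + 1) by ring]
  have : h (2 * (n + 1)) = t (n + 1) * h (2 * n + 1) + h (2 * n) := by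
    rw [e2, h, show 2 * n + 2 = 2 * (n + 1) by ring, t_two_mul]
  rw [this]
  linear_combination (- h (2 * n + 1)) * t_sq (n + 1)

lemma hA (n : ℕ) : h (2 * (n + 2)) = h (2 * (n + 1)) - t (n + 2) * t (n + 1) * h (2 * n) := by
  have e : (2 * (n + 1)) + 2 = 2 * (n + 2) := by ring
  have hd : h (2 * (n + 2)) = t (2 * (n + 2)) * h (2 * (n + 1) + 1) + h (2 * (n + 1)) := by
    rw [← e, h]
  rw [hd, t_two_mul, hB]
  ring

lemma h2_lt : h 2 = -1 := by
  show t 2 * h 1 + h 0 = -1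
  rw [show h 1 = 1 from rfl, show h 0 = 0 from rfl]
  rw [show (2 : ℕ) = 2 * 1 by norm_num, t_two_mul]
  rw [show (1 : ℕ) = 2 * 0 + 1 by norm_num, t_odd]
  norm_num [t]

lemma h4_lt : h 4 = -1 := by
  have h3 : h 3 = 0 := by
    show t 3 * h 2 + h 1 = 0
    rw [h2_lt, show h 1 = 1 from rfl, show (3 : ℕ) = 2 * 1 + 1 by norm_num, t_odd,
        show (1 : ℕ) = 2 * 0 + 1 by norm_num, t_odd]
    norm_num [t]
  show t 4 * h 3 + h 2 = -1
  rw [h3, h2_lt]; ring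

/-- main invariant -/
lemma inv (n : ℕ) : h (2 * (n + 1)) < 0 ∧ h (2 * (n + 2)) < 0 ∧
    (t (n + 3) * t (n + 2) = 1 → h (2 * (n + 2)) < h (2 * (n + 1))) := by
  induction n with
  | zero =>
    refine ⟨by rw [show 2 * (0 + 1) = 2 by norm_num, h2_lt]; norm_num,
           by rw [show 2 * (0 + 2) = 4 by norm_num, h4_lt]; norm_num, ?_⟩
    intro hc
    rw [show (0 : ℕ) + 3 = 2 * 1 + 1 by norm_num, t_odd,
        show (0 : ℕ) + 2 = 2 * 1 by norm_num, t_two_mul] at hc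
    nlinarith [t_sq 1]
  | succ n ih =>
    obtain ⟨h1, h2, h3⟩ := ih
    have hrec := hA (n + 1)
    have key : h (2 * (n + 3)) < 0 := by
      rcases mul_self_eq_one_iff.mp (by
        calc (t (n + 3) * t (n + 2)) * (t (n + 3) * t (n + 2))
            = (t (n+3) * t (n+3)) * (t (n+2) * t (n+2)) := by ring
          _ = 1 := by rw [t_sq, t_sq]; ring) with hc | hc
      · have := h3 hc
        rw [show n + 1 + 2 = n + 3 by ring, show n + 1 + 1 = n + 2 by ring, hc] at hrec
        linarith
      · rw [show n + 1 + 2 = n + 3 by ring, show n + 1 + 1 = n + 2 by ring, hc] at hrec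
        linarith
    refine ⟨h2, by rwa [show n + 1 + 2 = n + 3 by ring], ?_⟩
    intro hc4
    simp only [show n + 1 + 1 = n + 2 from rfl, show n + 1 + 2 = n + 3 from rfl,
      show n + 1 + 3 = n + 4 from rfl] at hc4 hrec ⊢
    -- show t (n+3) * t (n+2) = -1 using no_three
    have hc3 : t (n + 3) * t (n + 2) = -1 := by
      rcases mul_self_eq_one_iff.mp (by
        calc (t (n + 3) * t (n + 2)) * (t (n + 3) * t (n + 2))
            = (t (n+3) * t (n+3)) * (t (n+2) * t (n+2)) := by ring
          _ = 1 := by rw [t_sq, t_sq]; ring) with hc | hc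
      · exfalso
        apply no_three (n + 2)
        constructor
        · -- t (n+2) = t (n+3)
          rcases t_pm (n + 2) with h' | h' <;> rcases t_pm (n + 3) with h'' | h'' <;>
            rw [h', h''] <;> rw [h', h''] at hc <;> norm_num at hc
        · rcases t_pm (n + 3) with h' | h' <;> rcases t_pm (n + 4) with h'' | h'' <;>
            simp only [show n + 2 + 1 = n + 3 from rfl, show n + 2 + 2 = n + 4 from rfl] <;>
            rw [h', h''] <;> rw [h', h''] at hc4 <;> norm_num at hc4
      · exact hc
    rw [hc3] at hrec
    linarith

lemma h_even_neg (k : ℕ) (hk : 1 ≤ k) : h (2 * k) < 0 := by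
  obtain ⟨m, rfl⟩ : ∃ m, k = m + 1 := ⟨k - 1, by omega⟩
  exact (inv m).1

theorem stmt7 : ¬ ∃ n : ℕ, 0 < h n ∧ 0 < h (n + 1) ∧ 0 < h (n + 2) := by
  rintro ⟨n, hn, hn1, hn2⟩
  rcases Nat.eq_zero_or_pos n with rfl | hpos
  · simp [h] at hn
  · rcases Nat.even_or_odd (n + 1) with ⟨k, hk⟩ | ⟨k, hk⟩
    · have : h (2 * k) < 0 := h_even_neg k (by omega)
      rw [show 2 * k = n + 1 by omega] at this
      linarith
    · have : h (2 * (k + 1)) < 0 := h_even_neg (k + 1) (by omega)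
      rw [show 2 * (k + 1) = n + 2 by omega] at this
      linarith
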